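/- Let a > 0 and define c(k) = B(k-1+a,a+2)/B(a,a+1). Define c(1,0) = 0 and for k ≥ 1, c(1,k) = c(1,k-1)·(a+k-1)/(k+3a+1) + c(k)·(a+k-1)/(k+3a+1). Then c(1,k) admits the closed form c(1,k) = ((a+1)Γ(2a+1)Γ(a+k))/(Γ(a)Γ(k+3a+2)) · Σ_{j=1}^{k} Γ(j+3a+1)/Γ(j+1+2a). -/
import Mathlib


open Real Finset

noncomputable def betaF (x y : ℝ) : ℝ := Real.Gamma x * Real.Gamma y / Real.Gamma (x + y)

theorem c1k_closed_form (a : ℝ) (ha : 0 < a) (c1 : ℕ → ℝ)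
    (h0 : c1 0 = 0)
    (hrec : ∀ k : ℕ, 1 ≤ k →
      c1 k = c1 (k - 1) * ((a + (k : ℝ) - 1) / ((k : ℝ) + 3 * a + 1)) +
        (betaF ((k : ℝ) - 1 + a) (a + 2) / betaF a (a + 1)) *
          ((a + (k : ℝ) - 1) / ((k : ℝ) + 3 * a + 1))) :
    ∀ k : ℕ, 1 ≤ k →
      c1 k = ((a + 1) * Real.Gamma (2 * a + 1) * Real.Gamma (a + (k : ℝ))) /
          (Real.Gamma a * Real.Gamma ((k : ℝ) + 3 * a + 2)) *
        ∑ j ∈ Finset.Icc 1 k,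
          Real.Gamma ((j : ℝ) + 3 * a + 1) / Real.Gamma ((j : ℝ) + 1 + 2 * a) := by
  have hga : Real.Gamma a ≠ 0 := (Real.Gamma_pos_of_pos ha).ne'
  suffices H : ∀ k : ℕ, c1 k = ((a + 1) * Real.Gamma (2 * a + 1) * Real.Gamma (a + (k : ℝ))) /
          (Real.Gamma a * Real.Gamma ((k : ℝ) + 3 * a + 2)) *
        ∑ j ∈ Finset.Icc 1 k,
          Real.Gamma ((j : ℝ) + 3 * a + 1) / Real.Gamma ((j : ℝ) + 1 + 2 * a) by
    exact fun k _ => H k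
  intro k
  induction k with
  | zero => simp [h0]
  | succ n ih =>
    have hrec' := hrec (n + 1) (by omega)
    simp only [Nat.add_sub_cancel] at hrec'
    rw [hrec', ih, Finset.sum_Icc_succ_top (by omega : 1 ≤ n + 1)]
    push_cast at *
    have hn : (0:ℝ) ≤ n := Nat.cast_nonneg n
    -- Gamma functional equation instances
    have hG1 : Real.Gamma (a + (n + 1 : ℝ)) = (a + n) * Real.Gamma (a + n) := by
      rw [show a + ((n:ℝ) + 1) = (a + n) + 1 by ring, Real.Gamma_add_one (by positivity)]
    have hG2 : Real.Gamma ((n : ℝ) + 1 + 3 * a + 2) = ((n:ℝ) + 3 * a + 2) * Real.Gamma ((n:ℝ) + 3 * a + 2) := by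
      rw [show (n:ℝ) + 1 + 3 * a + 2 = ((n:ℝ) + 3 * a + 2) + 1 by ring,
        Real.Gamma_add_one (by positivity)]
    have hG3 : Real.Gamma (a + 2) = (a + 1) * Real.Gamma (a + 1) := by
      rw [show a + 2 = (a + 1) + 1 by ring, Real.Gamma_add_one (by positivity)]
    have e1 : ((n:ℝ) + 1 - 1 + a) = (n : ℝ) + a := by ring
    have e2 : ((n:ℝ) + a + (a + 2)) = (n : ℝ) + 2 * a + 2 := by ring
    have e3 : ((n:ℝ) + 1 + 3 * a + 1) = (n : ℝ) + 3 * a + 2 := by ring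
    have e4 : ((n:ℝ) + 1 + 1 + 2 * a) = (n : ℝ) + 2 * a + 2 := by ring
    have e5 : (a + (a + 1)) = 2 * a + 1 := by ring
    have e6 : Real.Gamma ((n:ℝ) + a) = Real.Gamma (a + (n:ℝ)) := by rw [add_comm]
    simp only [betaF, e1, e2, e3, e4, e5, e6, hG1, hG2, hG3]
    have h1 : Real.Gamma (a + (n:ℝ)) ≠ 0 := (Real.Gamma_pos_of_pos (by positivity)).ne'
    have h2 : Real.Gamma ((n:ℝ) + 3 * a + 2) ≠ 0 := (Real.Gamma_pos_of_pos (by positivity)).ne'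
    have h3 : Real.Gamma ((n:ℝ) + 2 * a + 2) ≠ 0 := (Real.Gamma_pos_of_pos (by positivity)).ne'
    have h4 : Real.Gamma (a + 1) ≠ 0 := (Real.Gamma_pos_of_pos (by positivity)).ne'
    have h5 : Real.Gamma (2 * a + 1) ≠ 0 := (Real.Gamma_pos_of_pos (by positivity)).ne'
    have h6 : ((n:ℝ) + 3 * a + 2) ≠ 0 := by positivity
    have h7 : (a + 1 : ℝ) ≠ 0 := by positivity
    field_simp
    ring
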